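/- arXiv:1211.5833 — 7 statements merged into one kernel-verified Lean document; each statement's English description precedes it below -/
import Mathlib

section
/- Let p be a prime and d ≥ 1 an integer. Suppose X is a topological abelian group together with a short exact sequence 0 → ℤ_p^d → X → ℤ/pℤ → 0 of abelian groups, in which the map i : ℤ_p^d → X is a continuous group homomorphism that is a homeomorphism onto its image, and the map f : X → ℤ/pℤ is a continuous surjective group homomorphism whose kernel equals the image of i (where ℤ/pℤ carries the discrete topology). Then X is topologically isomorphic either to ℤ_p^d or to ℤ_p^d × ℤ/pℤ (the latter with the product topology, ℤ/pℤ discrete). -/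
/-- If `X` is a topological abelian group sitting in a short exact sequence
`0 → ℤ_p^d → X → ℤ/pℤ → 0` in which `i : ℤ_p^d → X` is a topological embedding and
`f : X → ℤ/pℤ` is continuous and surjective (`ℤ/pℤ` discrete) with kernel the image of `i`,
then `X` is topologically isomorphic either to `ℤ_p^d` or to `ℤ_p^d × ℤ/pℤ`. -/
theorem extension_of_padic_by_cyclic (p : ℕ) [Fact p.Prime] (d : ℕ) (hd : 1 ≤ d)
    (X : Type) [AddCommGroup X] [TopologicalSpace X] [IsTopologicalAddGroup X]
    (i : (Fin d → ℤ_[p]) →+ X) (f : X →+ ZMod p)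
    (hi_emb : Topology.IsEmbedding i) (hi_inj : Function.Injective i)
    (hf_cont : Continuous f) (hf_surj : Function.Surjective f)
    (hexact : ∀ x : X, f x = 0 ↔ x ∈ Set.range i) :
    (∃ e : X ≃+ (Fin d → ℤ_[p]), Continuous e ∧ Continuous e.symm) ∨
    (∃ e : X ≃+ (Fin d → ℤ_[p]) × ZMod p, Continuous e ∧ Continuous e.symm) := by
  classical
  have hp0 : ∀ k : ZMod p, p • k = 0 := fun k => by
    simp [nsmul_eq_mul, ZMod.natCast_self]
  have hpne : (p : ℤ_[p]) ≠ 0 := Nat.cast_ne_zero.mpr (Fact.out : p.Prime).ne_zero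
  have hkerset : Set.range ⇑i = ⇑f ⁻¹' {0} := by
    ext y
    simp only [Set.mem_preimage, Set.mem_singleton_iff]
    exact (hexact y).symm
  have hopen : IsOpen (Set.range ⇑i) := by
    rw [hkerset]; exact (isOpen_discrete _).preimage hf_cont
  have hclosed : IsClosed (Set.range ⇑i) := by
    rw [hkerset]; exact (isClosed_discrete _).preimage hf_cont
  have hopenemb : Topology.IsOpenEmbedding ⇑i := ⟨hi_emb, hopen⟩
  -- X is T2
  have hT1 : T1Space X := by
    apply IsTopologicalAddGroup.t1Space
    have h1 : IsOpen ((⇑i) '' {(0 : Fin d → ℤ_[p])}ᶜ) :=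
      hopenemb.isOpenMap _ isOpen_compl_singleton
    have hcompl : ({(0 : X)} : Set X)ᶜ
        = (Set.range ⇑i)ᶜ ∪ (⇑i) '' {(0 : Fin d → ℤ_[p])}ᶜ := by
      ext y
      simp only [Set.mem_compl_iff, Set.mem_singleton_iff, Set.mem_union, Set.mem_image,
        Set.mem_range, Set.mem_compl_iff]
      constructor
      · intro hy
        by_cases hr : ∃ v, i v = y
        · obtain ⟨v, rfl⟩ := hr
          exact Or.inr ⟨v, fun h0 => hy (by rw [h0, map_zero]), rfl⟩
        · exact Or.inl hr
      · rintro (h | ⟨v, hv, rfl⟩)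
        · intro h0; exact h ⟨0, by rw [map_zero, h0]⟩
        · intro h0; exact hv (hi_inj (by rw [h0, map_zero]))
    rw [← isOpen_compl_iff, hcompl]
    exact hclosed.isOpen_compl.union h1
  haveI hT2 : T2Space X := by
    haveI := hT1
    infer_instance
  -- X is compact
  have hAc : IsCompact (Set.range ⇑i) := by
    rw [← Set.image_univ]
    exact isCompact_univ.image hi_emb.continuous
  haveI hXc : CompactSpace X := by
    choose rep hrep using hf_surj
    refine ⟨IsCompact.of_isClosed_subset (isCompact_iUnion (fun k : ZMod p =>
      hAc.image (continuous_add_left (rep k)))) isClosed_univ fun y _ => ?_⟩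
    refine Set.mem_iUnion.mpr ⟨f y, ⟨y - rep (f y), ?_, by show rep (f y) + (y - rep (f y)) = y; rw [add_comm, sub_add_cancel]⟩⟩
    exact (hexact _).mp (by rw [map_sub, hrep, sub_self])
  obtain ⟨x, hx⟩ := hf_surj 1
  have hfx : f (p • x) = 0 := by rw [map_nsmul, hx, hp0]
  obtain ⟨a, ha⟩ := (hexact _).mp hfx
  -- decomposition of an arbitrary element
  have hdec : ∀ y : X, ∃ u : Fin d → ℤ_[p], y = i u + ((f y).val) • x := by
    intro y
    have h0 : f (y - ((f y).val) • x) = 0 := by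
      rw [map_sub, map_nsmul, hx]
      simp [nsmul_eq_mul, ZMod.natCast_val, ZMod.cast_id]
    obtain ⟨u, hu⟩ := (hexact _).mp h0
    exact ⟨u, by rw [hu]; abel⟩
  by_cases hsplit : ∃ b : Fin d → ℤ_[p], p • b = a
  · -- split case : X ≃ (Fin d → ℤ_[p]) × ZMod p
    right
    obtain ⟨b, hb⟩ := hsplit
    set x' := x - i b with hx'
    have hfib : f (i b) = 0 := (hexact _).mpr ⟨b, rfl⟩
    have hfx' : f x' = 1 := by rw [hx', map_sub, hx, hfib, sub_zero]
    have hpx' : p • x' = 0 := by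
      rw [hx', smul_sub, ← ha, ← map_nsmul, hb, sub_self]
    set φ₂ : ZMod p →+ X := ZMod.lift p ⟨zmultiplesHom X x', by simpa using hpx'⟩ with hφ₂
    have hφ₂coe : ∀ m : ℤ, φ₂ ((m : ℤ) : ZMod p) = m • x' := fun m => by
      rw [hφ₂, ZMod.lift_coe]; rfl
    have hfφ₂ : ∀ k : ZMod p, f (φ₂ k) = k := by
      intro k
      obtain ⟨m, rfl⟩ := ZMod.intCast_surjective k
      rw [hφ₂coe, map_zsmul, hfx']
      simp
    set φ : (Fin d → ℤ_[p]) × ZMod p →+ X := AddMonoidHom.coprod i φ₂ with hφ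
    have hφapp : ∀ v k, φ (v, k) = i v + φ₂ k := fun v k => rfl
    have hφbij : Function.Bijective φ := by
      constructor
      · rw [injective_iff_map_eq_zero]
        rintro ⟨v, k⟩ h
        rw [hφapp] at h
        have hk : k = 0 := by
          have h2 := congrArg f h
          rwa [map_add, (hexact (i v)).mpr ⟨v, rfl⟩, hfφ₂, zero_add, map_zero] at h2
        subst hk
        rw [map_zero, add_zero] at h
        have hv : v = 0 := hi_inj (by rw [h, map_zero])
        simp [hv]
      · intro y
        have h0 : f (y - φ₂ (f y)) = 0 := by rw [map_sub, hfφ₂, sub_self]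
        obtain ⟨v, hv⟩ := (hexact _).mp h0
        exact ⟨(v, f y), by rw [hφapp, hv]; abel⟩
    have hφcont : Continuous φ := by
      have hrepr : (⇑φ : (Fin d → ℤ_[p]) × ZMod p → X) = fun vk => i vk.1 + φ₂ vk.2 := rfl
      rw [hrepr]
      exact (hi_emb.continuous.comp continuous_fst).add
        (continuous_of_discreteTopology.comp continuous_snd)
    set ψ := AddEquiv.ofBijective φ hφbij with hψ
    have hψcont : Continuous ψ := hφcont
    refine ⟨ψ.symm, ?_, ?_⟩
    · exact (Continuous.homeoOfEquivCompactToT2 (f := ψ.toEquiv) hψcont).symm.continuous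
    · show Continuous ⇑ψ
      exact hψcont
  · -- non-split case : X ≃ (Fin d → ℤ_[p])
    left
    have hj : ∃ j : Fin d, ¬ (p : ℤ_[p]) ∣ a j := by
      by_contra h
      push_neg at h
      choose c hc using h
      exact hsplit ⟨c, funext fun j => by rw [Pi.smul_apply, nsmul_eq_mul, ← hc j]⟩
    obtain ⟨j₀, hj₀⟩ := hj
    have hu : IsUnit (a j₀) := by
      by_contra h
      refine hj₀ ?_
      rw [← PadicInt.norm_lt_one_iff_dvd]
      exact lt_of_le_of_ne (a j₀).norm_le_one fun he => h (PadicInt.isUnit_iff.mpr he)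
    obtain ⟨u0, hu0⟩ := hu.exists_right_inv
    set Tfun : (Fin d → ℤ_[p]) → (Fin d → ℤ_[p]) :=
      fun w k => if k = j₀ then w j₀ * a j₀ else w j₀ * a k + p * w k with hTfun
    have hTadd : ∀ w w', Tfun (w + w') = Tfun w + Tfun w' := by
      intro w w'
      funext k
      simp only [hTfun, Pi.add_apply]
      by_cases hk : k = j₀
      · simp only [if_pos hk]; ring
      · simp only [if_neg hk]; ring
    set T : (Fin d → ℤ_[p]) →+ (Fin d → ℤ_[p]) := AddMonoidHom.mk' Tfun hTadd with hT
    have hTapp : ∀ w k, T w k =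
        if k = j₀ then w j₀ * a j₀ else w j₀ * a k + p * w k := fun w k => rfl
    have hTcont : Continuous ⇑T := by
      apply continuous_pi
      intro k
      simp only [hTapp]
      by_cases hk : k = j₀
      · simp only [if_pos hk]
        exact (continuous_apply j₀).mul continuous_const
      · simp only [if_neg hk]
        exact ((continuous_apply j₀).mul continuous_const).add
          (continuous_const.mul (continuous_apply k))
    have hTinj : Function.Injective ⇑T := by
      rw [injective_iff_map_eq_zero]
      intro w h
      have h0 : w j₀ = 0 := by
        have h2 := congrFun h j₀
        rw [hTapp, if_pos rfl] at h2
        have h2' : w j₀ * a j₀ = 0 := by simpa using h2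
        exact (mul_eq_zero.mp h2').resolve_right hu.ne_zero
      funext k
      by_cases hk : k = j₀
      · rw [hk, h0]; simp
      · have h2 := congrFun h k
        rw [hTapp, if_neg hk, h0, zero_mul, zero_add] at h2
        have h2' : (p : ℤ_[p]) * w k = 0 := by simpa using h2
        simpa using (mul_eq_zero.mp h2').resolve_left hpne
    have hTsolve : ∀ (c : ℤ_[p]) (u : Fin d → ℤ_[p]),
        ∃ w : Fin d → ℤ_[p], ∀ k, T w k = p * u k + c * a k := by
      intro c u
      set w : Fin d → ℤ_[p] :=
        fun k => if k = j₀ then c + p * u j₀ * u0 else u k - u j₀ * u0 * a k with hwdef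
      have hwj₀ : w j₀ = c + p * u j₀ * u0 := by simp [hwdef]
      have hwk : ∀ k, k ≠ j₀ → w k = u k - u j₀ * u0 * a k := fun k hk => by
        simp [hwdef, if_neg hk]
      refine ⟨w, fun k => ?_⟩
      by_cases hk : k = j₀
      · rw [hTapp, if_pos hk, hwj₀, hk]
        linear_combination ((p : ℤ_[p]) * u j₀) * hu0
      · rw [hTapp, if_neg hk, hwj₀, hwk k hk]
        ring
    -- the map χ : y ↦ i⁻¹ (p • y)
    have hker2 : ∀ y : X, ∃ v : Fin d → ℤ_[p], i v = p • y := by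
      intro y
      exact (hexact _).mp (by rw [map_nsmul, hp0])
    choose χfun hχ using hker2
    have hχadd : ∀ y z, χfun (y + z) = χfun y + χfun z := by
      intro y z
      apply hi_inj
      rw [map_add, hχ, hχ, hχ, smul_add]
    set χ : X →+ (Fin d → ℤ_[p]) := AddMonoidHom.mk' χfun hχadd with hχdef
    have hχapp : ∀ y, χ y = χfun y := fun y => rfl
    have hχcont : Continuous ⇑χ := by
      rw [hi_emb.continuous_iff]
      have hrepr : (⇑i ∘ ⇑χ) = fun y : X => p • y := funext fun y => hχ y
      rw [hrepr]
      exact continuous_nsmul p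
    -- the key computation
    have hkeycomp : ∀ (y : X) (u : Fin d → ℤ_[p]) (n : ℕ), y = i u + n • x →
        i (p • u + n • a) = p • y := by
      intro y u n hu'
      rw [map_add, map_nsmul, map_nsmul, ha, hu', smul_add, smul_comm n p x]
    have hχinj : Function.Injective ⇑χ := by
      rw [injective_iff_map_eq_zero]
      intro y h
      have hpy : p • y = 0 := by
        rw [← hχ y, ← hχapp, h, map_zero]
      obtain ⟨u, hu'⟩ := hdec y
      have key := hkeycomp y u ((f y).val) hu'
      have hz : p • u + ((f y).val) • a = 0 := hi_inj (by rw [key, hpy, map_zero])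
      have hcoord : (p : ℤ_[p]) * u j₀ + ((f y).val : ℤ_[p]) * a j₀ = 0 := by
        have h3 := congrFun hz j₀
        simpa only [Pi.add_apply, Pi.smul_apply, nsmul_eq_mul, Pi.zero_apply, Pi.mul_apply,
          Pi.natCast_apply] using h3
      have hdvd : (p : ℤ_[p]) ∣ ((f y).val : ℤ_[p]) * a j₀ :=
        ⟨-u j₀, by linear_combination hcoord⟩
      have hdvdn : (p : ℤ_[p]) ∣ ((f y).val : ℤ_[p]) :=
        (PadicInt.prime_p.dvd_mul.mp hdvd).resolve_right hj₀
      have hn0 : (f y).val = 0 := by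
        have h4 : ((p : ℤ) ∣ ((f y).val : ℤ)) := by
          rw [← PadicInt.norm_int_lt_one_iff_dvd]
          rw [← PadicInt.norm_lt_one_iff_dvd] at hdvdn
          simpa using hdvdn
        rcases Nat.eq_zero_or_pos (f y).val with h5 | h5
        · exact h5
        · exact absurd (Nat.le_of_dvd h5 (Int.ofNat_dvd.mp h4))
            (not_le.mpr (ZMod.val_lt (f y)))
      rw [hn0, zero_nsmul, add_zero] at hu' hz
      have hu0' : u = 0 := by
        funext k
        have h3 := congrFun hz k
        have h4 : (p : ℤ_[p]) * u k = 0 := by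
          simpa only [Pi.smul_apply, nsmul_eq_mul, Pi.zero_apply] using h3
        simpa using (mul_eq_zero.mp h4).resolve_left hpne
      rw [hu', hu0', map_zero]
    -- ranges agree
    have hrangeTχ : ∀ v : Fin d → ℤ_[p], (∃ y, χ y = v) ↔ (∃ w, T w = v) := by
      intro v
      constructor
      · rintro ⟨y, rfl⟩
        obtain ⟨u, hu'⟩ := hdec y
        have key := hkeycomp y u ((f y).val) hu'
        have hχy : χ y = p • u + ((f y).val) • a := hi_inj (by rw [hχapp, hχ, key])
        obtain ⟨w, hw⟩ := hTsolve (((f y).val : ℤ_[p])) u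
        refine ⟨w, ?_⟩
        funext k
        rw [hw k, hχy]
        simp only [Pi.add_apply, Pi.smul_apply, nsmul_eq_mul, Pi.mul_apply,
          Pi.natCast_apply]
      · rintro ⟨w, rfl⟩
        obtain ⟨m, c', hc⟩ : ∃ (m : ℕ) (c' : ℤ_[p]), w j₀ = m + p * c' := by
          obtain ⟨c', hc⟩ := Ideal.mem_span_singleton'.mp
            (by simpa using PadicInt.appr_spec 1 (w j₀))
          exact ⟨(w j₀).appr 1, c', by linear_combination (-1 : ℤ_[p]) * hc⟩
        set w2 : Fin d → ℤ_[p] := fun k => if k = j₀ then 0 else w k with hw2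
        set g : Fin d → ℤ_[p] := fun k => c' * a k + w2 k with hg
        have hw2j₀ : w2 j₀ = 0 := by simp [hw2]
        have hw2k : ∀ k, k ≠ j₀ → w2 k = w k := fun k hk => by simp [hw2, if_neg hk]
        refine ⟨m • x + i g, ?_⟩
        apply hi_inj
        rw [hχapp, hχ]
        have hstep : p • (m • x + i g) = i (m • a + p • g) := by
          rw [smul_add, smul_comm p m x, ← ha, ← map_nsmul, ← map_nsmul, ← map_add]
        rw [hstep]
        congr 1
        funext k
        have hgk : g k = c' * a k + w2 k := rfl
        by_cases hk : k = j₀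
        · rw [Pi.add_apply, Pi.smul_apply, Pi.smul_apply, nsmul_eq_mul, nsmul_eq_mul,
            hgk, hTapp, if_pos hk, hk, hw2j₀]
          linear_combination (-(a j₀) : ℤ_[p]) * hc
        · rw [Pi.add_apply, Pi.smul_apply, Pi.smul_apply, nsmul_eq_mul, nsmul_eq_mul,
            hgk, hTapp, if_neg hk, hw2k k hk]
          linear_combination (-(a k) : ℤ_[p]) * hc
    have hrange : χ.range = T.range := by
      ext v
      simp only [AddMonoidHom.mem_range]
      exact hrangeTχ v
    set e : X ≃+ (Fin d → ℤ_[p]) := (AddMonoidHom.ofInjective hχinj).trans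
      ((AddEquiv.addSubgroupCongr hrange).trans (AddMonoidHom.ofInjective hTinj).symm)
      with he
    have hkey : ∀ y, T (e y) = χ y := by
      intro y
      show T ((AddMonoidHom.ofInjective hTinj).symm
        ((AddEquiv.addSubgroupCongr hrange) (AddMonoidHom.ofInjective hχinj y))) = χ y
      rw [AddMonoidHom.apply_ofInjective_symm]
      rw [AddEquiv.addSubgroupCongr_apply]
      exact AddMonoidHom.ofInjective_apply hχinj
    have hTce := hTcont.isClosedEmbedding hTinj
    have hecont : Continuous ⇑e := by
      rw [hTce.isEmbedding.continuous_iff]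
      have hrepr : ⇑T ∘ ⇑e = ⇑χ := funext hkey
      rw [hrepr]
      exact hχcont
    exact ⟨e, hecont,
      (Continuous.homeoOfEquivCompactToT2 (f := e.toEquiv) hecont).symm.continuous⟩
end

section
/- Let p be a prime, d ≥ 1 and n ≥ 1 integers. Let M₁ be a topological abelian group and M₁ ⊇ M₂ ⊇ ⋯ ⊇ Mₙ a chain of subgroups, each carrying the subspace topology, such that for every 1 ≤ i < n the subgroup M_{i+1} is open in M_i and the quotient M_i/M_{i+1} is isomorphic to ℤ/pℤ, and such that Mₙ is topologically isomorphic to ℤ_p^d. Then M₁ is torsion-free if and only if M₁ is topologically isomorphic to ℤ_p^d. -/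
/-- If a topological abelian group `M₁` admits a finite filtration
`M₁ ⊇ M₂ ⊇ ⋯ ⊇ Mₙ` by subgroups (each with the subspace topology), in which each
`M_{i+1}` is open in `M_i` with quotient `M_i/M_{i+1}` isomorphic to `ℤ/pℤ`, and in which
`Mₙ` is topologically isomorphic to `ℤ_p^d`, then `M₁` is torsion-free if and only if
`M₁` is topologically isomorphic to `ℤ_p^d`. -/
theorem torsionFree_iff_topIso_of_filtration (p : ℕ) [Fact p.Prime] (d n : ℕ)
    (hd : 1 ≤ d) (hn : 1 ≤ n)
    (X : Type) [AddCommGroup X] [TopologicalSpace X] [IsTopologicalAddGroup X]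
    (M : ℕ → AddSubgroup X) (hM1 : M 1 = ⊤)
    (hchain : ∀ i, 1 ≤ i → i < n → M (i + 1) ≤ M i)
    (hopen : ∀ i, 1 ≤ i → i < n →
      IsOpen {x : M i | (x : X) ∈ M (i + 1)})
    (hquot : ∀ i, 1 ≤ i → i < n →
      Nonempty ((M i ⧸ (M (i + 1)).addSubgroupOf (M i)) ≃+ ZMod p))
    (hlast : ∃ e : M n ≃+ (Fin d → ℤ_[p]), Continuous e ∧ Continuous e.symm) :
    (∀ (x : X) (k : ℕ), 0 < k → k • x = 0 → x = 0) ↔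
      ∃ e : X ≃+ (Fin d → ℤ_[p]), Continuous e ∧ Continuous e.symm := by
  obtain ⟨e, hec, hec'⟩ := hlast
  have hp : p.Prime := Fact.out
  constructor
  · intro htf
    -- Step 1: each M i (1 ≤ i ≤ n) is open in X
    have hopenX : ∀ i, 1 ≤ i → i ≤ n → IsOpen ((M i : Set X)) := by
      intro i hi1 hin
      induction i, hi1 using Nat.le_induction with
      | base => rw [hM1]; simp
      | succ i hi1 ih =>
        have hin' : i < n := hin
        have hMi := ih (le_of_lt hin')
        have h1 := hopen i hi1 hin'
        have h2 : Subtype.val '' {x : M i | (x : X) ∈ M (i + 1)} = (M (i+1) : Set X) := by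
          ext x
          constructor
          · rintro ⟨⟨y, hy⟩, hy2, rfl⟩; exact hy2
          · intro hx; exact ⟨⟨x, hchain i hi1 hin' hx⟩, hx, rfl⟩
        rw [← h2]
        exact hMi.isOpenMap_subtype_val _ h1
    -- Step 2: index computation
    have hindex : ∀ i, 1 ≤ i → i ≤ n → (M i).index = p ^ (i - 1) := by
      intro i hi1 hin
      induction i, hi1 using Nat.le_induction with
      | base => rw [hM1]; simp [AddSubgroup.index_top]
      | succ i hi1 ih =>
        have hin' : i < n := hin
        have hrel : (M (i+1)).relIndex (M i) = p := by
          obtain ⟨q⟩ := hquot i hi1 hin'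
          have := Nat.card_congr q.toEquiv
          rw [Nat.card_zmod] at this
          exact this
        have h := AddSubgroup.relIndex_mul_index (hchain i hi1 hin')
        rw [hrel, ih (le_of_lt hin')] at h
        rw [← h, ← pow_succ']
        congr 1
        omega
    set K : ℕ := p ^ (n - 1) with hK
    have hKpos : 0 < K := Nat.pow_pos hp.pos
    have hidx : (M n).index = K := hindex n hn le_rfl
    -- Step 4: K • x ∈ M n
    have hKmem : ∀ x : X, K • x ∈ M n := by
      intro x
      have h1 : K • (QuotientAddGroup.mk x : X ⧸ M n) = 0 := by
        rw [← hidx]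
        exact card_nsmul_eq_zero'
      rw [← QuotientAddGroup.mk_nsmul] at h1
      exact (QuotientAddGroup.eq_zero_iff _).mp h1
    -- Step 5: the map f
    have fadd : ∀ x y : X, (e ⟨K • (x + y), hKmem _⟩ : Fin d → ℤ_[p]) =
        e ⟨K • x, hKmem _⟩ + e ⟨K • y, hKmem _⟩ := by
      intro x y
      rw [← map_add]
      congr 1
      ext
      simp [smul_add]
    let f : X →+ (Fin d → ℤ_[p]) :=
      { toFun := fun x => e ⟨K • x, hKmem x⟩
        map_zero' := by simp, map_add' := fadd }
    have hfc : Continuous f := by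
      apply hec.comp
      exact Continuous.subtype_mk (continuous_id.nsmul K) _
    have hfinj : Function.Injective f := by
      rw [injective_iff_map_eq_zero]
      intro x hx
      have : (⟨K • x, hKmem x⟩ : M n) = 0 :=
        e.injective (by rw [map_zero]; exact hx)
      exact htf x K hKpos (by simpa using congrArg Subtype.val this)
    -- Step 8: K • y lands in the range
    have hKrange : ∀ y : Fin d → ℤ_[p], K • y ∈ f.range := by
      intro y
      refine ⟨(e.symm y : X), ?_⟩
      show (e ⟨K • (e.symm y : X), _⟩ : Fin d → ℤ_[p]) = K • y
      have : (⟨K • (e.symm y : X), hKmem _⟩ : M n) = K • (e.symm y) := by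
        ext; simp
      rw [this, map_nsmul, e.apply_symm_apply]
    -- Step 9: range is open
    have hro : IsOpen (f.range : Set (Fin d → ℤ_[p])) := by
      have hV : IsOpen {y : Fin d → ℤ_[p] | ∀ i, ‖y i‖ < (p : ℝ) ^ (-(n - 1 : ℕ) + 1 : ℤ)} := by
        rw [Set.setOf_forall]
        exact isOpen_iInter_of_finite fun i =>
          isOpen_lt (continuous_norm.comp (continuous_apply i)) continuous_const
      have h0V : (0 : Fin d → ℤ_[p]) ∈ {y : Fin d → ℤ_[p] | ∀ i, ‖y i‖ < (p : ℝ) ^ (-(n - 1 : ℕ) + 1 : ℤ)} := by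
        intro i
        simp only [Pi.zero_apply, norm_zero]
        exact zpow_pos (by exact_mod_cast hp.pos) _
      refine AddSubgroup.isOpen_of_mem_nhds _ (Filter.mem_of_superset (hV.mem_nhds h0V) ?_)
      intro y hy
      have hdvd : ∀ i, (p : ℤ_[p]) ^ (n - 1 : ℕ) ∣ y i := by
        intro i
        have h1 := (PadicInt.norm_lt_pow_iff_norm_le_pow_sub_one (y i) _).mp (hy i)
        rw [add_sub_cancel_right] at h1
        have h2 := (PadicInt.norm_le_pow_iff_mem_span_pow (y i) (n - 1)).mp h1
        rwa [Ideal.mem_span_singleton] at h2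
      choose w hw using hdvd
      have : y = K • w := by
        funext i
        rw [hw i]
        show _ = K • w i
        rw [nsmul_eq_mul, hK]
        push_cast
        ring
      rw [this]
      exact hKrange w
    have hrc : IsClosed (f.range : Set (Fin d → ℤ_[p])) :=
      AddSubgroup.isClosed_of_isOpen _ hro
    -- Step 9b: range is a ℤ_p-submodule
    have hsmul : ∀ (c : ℤ_[p]) (y : Fin d → ℤ_[p]), y ∈ f.range → c • y ∈ f.range := by
      intro c y hy
      have hS : IsClosed {c : ℤ_[p] | c • y ∈ f.range} :=
        hrc.preimage (continuous_id.smul continuous_const)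
      have hsub : Set.range (Nat.cast : ℕ → ℤ_[p]) ⊆ {c : ℤ_[p] | c • y ∈ f.range} := by
        rintro _ ⟨m, rfl⟩
        simp only [Set.mem_setOf_eq, Nat.cast_smul_eq_nsmul]
        exact AddSubgroup.nsmul_mem _ hy m
      have hdense : Dense (Set.range (Nat.cast : ℕ → ℤ_[p])) := PadicInt.denseRange_natCast
      have hc : c ∈ closure (Set.range (Nat.cast : ℕ → ℤ_[p])) := by
        rw [hdense.closure_eq]; trivial
      exact closure_minimal hsub hS hc
    let Lmod : Submodule ℤ_[p] (Fin d → ℤ_[p]) :=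
      { carrier := f.range
        add_mem' := fun ha hb => AddSubgroup.add_mem _ ha hb
        zero_mem' := AddSubgroup.zero_mem _
        smul_mem' := fun c y hy => hsmul c y hy }
    -- Step 10: basis of Lmod
    have hKne : (K : ℤ_[p]) ≠ 0 := Nat.cast_ne_zero.mpr hKpos.ne'
    let j : (Fin d → ℤ_[p]) →ₗ[ℤ_[p]] ↥Lmod :=
      { toFun := fun y => ⟨(K : ℤ_[p]) • y, by
          show _ ∈ f.range
          rw [Nat.cast_smul_eq_nsmul]; exact hKrange y⟩
        map_add' := fun y z => by ext i; simp only [Submodule.coe_add, Pi.add_apply, Pi.smul_apply, smul_eq_mul]; ring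
        map_smul' := fun c y => by ext i; show (K:ℤ_[p]) * (c * y i) = c * ((K:ℤ_[p]) * y i); ring }
    have hjinj : Function.Injective j := by
      intro y z h
      have h2 : (K : ℤ_[p]) • y = (K : ℤ_[p]) • z := congrArg Subtype.val h
      exact smul_right_injective (Fin d → ℤ_[p]) hKne h2
    obtain ⟨m, b⟩ := Submodule.basisOfPid (Pi.basisFun ℤ_[p] (Fin d)) Lmod
    have hrank : Module.rank ℤ_[p] ↥Lmod = d := by
      have h1 : Module.rank ℤ_[p] (Fin d → ℤ_[p]) ≤ Module.rank ℤ_[p] ↥Lmod :=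
        j.rank_le_of_injective hjinj
      have h2 : Module.rank ℤ_[p] ↥Lmod ≤ Module.rank ℤ_[p] (Fin d → ℤ_[p]) :=
        Lmod.rank_le
      have h3 : Module.rank ℤ_[p] (Fin d → ℤ_[p]) = d := by
        rw [rank_fun']; simp
      rw [h3] at h1 h2
      exact le_antisymm h2 h1
    have hmd : m = d := by
      have := b.mk_eq_rank''
      rw [hrank, Cardinal.mk_fin] at this
      exact_mod_cast this
    let b' : Module.Basis (Fin d) ℤ_[p] ↥Lmod := b.reindex (finCongr hmd)
    let g : (Fin d → ℤ_[p]) ≃ₗ[ℤ_[p]] ↥Lmod :=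
      Module.Basis.equiv (Pi.basisFun ℤ_[p] (Fin d)) b' (Equiv.refl _)
    -- Step 11: g is a homeomorphism
    have gc : Continuous fun y : Fin d → ℤ_[p] => ((g y : ↥Lmod) : Fin d → ℤ_[p]) :=
      (Lmod.subtype.comp g.toLinearMap).continuous_on_pi
    have gcont : Continuous (g : (Fin d → ℤ_[p]) → ↥Lmod) :=
      Continuous.subtype_mk gc _
    have gsymm : Continuous (g.symm : ↥Lmod → (Fin d → ℤ_[p])) := by
      exact (Continuous.homeoOfEquivCompactToT2 (f := g.toEquiv) gcont).symm.continuous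
    -- Step 12: X is compact
    have hMncompact : IsCompact ((M n : Set X)) := by
      have hcs : CompactSpace ↥(M n) := by
        let h : ↥(M n) ≃ₜ (Fin d → ℤ_[p]) :=
          { toEquiv := e.toEquiv, continuous_toFun := hec, continuous_invFun := hec' }
        exact h.symm.compactSpace
      exact isCompact_iff_compactSpace.mpr hcs
    haveI : (M n).FiniteIndex := ⟨by rw [hidx]; exact hKpos.ne'⟩
    haveI : CompactSpace X := by
      rw [← isCompact_univ_iff]
      have huniv : (Set.univ : Set X) =
          ⋃ q : X ⧸ M n, ((Quotient.out q) + ·) '' (M n : Set X) := by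
        ext x
        simp only [Set.mem_univ, true_iff, Set.mem_iUnion]
        refine ⟨QuotientAddGroup.mk x, -(QuotientAddGroup.mk x : X ⧸ M n).out + x, ?_, by show Quotient.out _ + (-Quotient.out _ + x) = x; exact add_neg_cancel_left _ _⟩
        have : (QuotientAddGroup.mk ((QuotientAddGroup.mk x : X ⧸ M n).out) : X ⧸ M n)
            = QuotientAddGroup.mk x := by
          exact Quotient.out_eq _
        exact (QuotientAddGroup.eq).mp this
      rw [huniv]
      exact isCompact_iUnion fun q => hMncompact.image (continuous_add_left _)
    -- Step 13: assemble the equivalence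
    have hmemL : ∀ x : X, f x ∈ Lmod := fun x => ⟨x, rfl⟩
    let Φfun : X → (Fin d → ℤ_[p]) := fun x => g.symm ⟨f x, hmemL x⟩
    have hbij : Function.Bijective Φfun := by
      constructor
      · intro a b h
        have := g.symm.injective h
        exact hfinj (congrArg Subtype.val this)
      · intro y
        obtain ⟨x, hx⟩ := (g y).2
        refine ⟨x, ?_⟩
        show g.symm ⟨f x, hmemL x⟩ = y
        have : (⟨f x, hmemL x⟩ : ↥Lmod) = g y := Subtype.ext hx
        rw [this, g.symm_apply_apply]
    let Φ : X ≃+ (Fin d → ℤ_[p]) :=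
      AddEquiv.mk' (Equiv.ofBijective Φfun hbij) (by
        intro a b
        show g.symm ⟨f (a + b), _⟩ = g.symm ⟨f a, _⟩ + g.symm ⟨f b, _⟩
        rw [← map_add]
        congr 1
        ext
        simp)
    have hΦc : Continuous Φfun := gsymm.comp (Continuous.subtype_mk hfc _)
    exact ⟨Φ, hΦc, by
      exact (Continuous.homeoOfEquivCompactToT2 (f := Φ.toEquiv) hΦc).symm.continuous⟩

  · rintro ⟨e', _, _⟩
    intro x k hk hkx
    have h1 : k • e' x = 0 := by rw [← map_nsmul, hkx, map_zero]
    have h2 : e' x = 0 := by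
      funext i
      have : k • (e' x i) = 0 := congrFun h1 i
      rw [nsmul_eq_mul] at this
      rcases mul_eq_zero.mp this with h | h
      · exact absurd h (by exact_mod_cast hk.ne')
      · exact h
    have := congrArg e'.symm h2
    simpa using this
end

section
/- Let p be a prime and let K be a finite field extension of ℚ_p of degree d, equipped with its canonical topology as a finite-dimensional ℚ_p-vector space. Let 𝒪_K denote the integral closure of ℤ_p in K, with the subspace topology. Then the additive topological group 𝒪_K is topologically isomorphic to ℤ_p^d. -/
open Topology

/-- Let `K` be a finite extension of `ℚ_p` of degree `d`, equipped with its canonical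
topology as a finite-dimensional `ℚ_p`-vector space (any Hausdorff vector space topology;
these all coincide). Then the ring of integers `𝒪_K`, i.e. the integral closure of `ℤ_p`
in `K`, with the subspace topology, is topologically isomorphic as an additive topological
group to `ℤ_p^d`. -/
theorem ringOfIntegers_topIso_Zp_pow (p : ℕ) [Fact p.Prime] (K : Type) [Field K]
    [TopologicalSpace K] [IsTopologicalAddGroup K] [T2Space K]
    [Algebra ℚ_[p] K] [ContinuousSMul ℚ_[p] K]
    [Algebra ℤ_[p] K] [IsScalarTower ℤ_[p] ℚ_[p] K]
    [FiniteDimensional ℚ_[p] K] (d : ℕ) (hd : d = Module.finrank ℚ_[p] K) :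
    ∃ e : integralClosure ℤ_[p] K ≃+ (Fin d → ℤ_[p]),
      Continuous e ∧ Continuous e.symm := by
  set C := integralClosure ℤ_[p] K with hC
  haveI : Module.IsTorsionFree ℤ_[p] K := by
    refine Module.isTorsionFree_iff_algebraMap_injective.2 ?_
    rw [IsScalarTower.algebraMap_eq ℤ_[p] ℚ_[p] K, RingHom.coe_comp]
    exact (algebraMap ℚ_[p] K).injective.comp Subtype.coe_injective
  haveI : Module.Free ℤ_[p] C := IsIntegralClosure.module_free ℤ_[p] ℚ_[p] K C
  haveI : Module.Finite ℤ_[p] C := IsIntegralClosure.finite ℤ_[p] ℚ_[p] K C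
  have hrank : Fintype.card (Module.Free.ChooseBasisIndex ℤ_[p] C) = d := by
    rw [← Module.finrank_eq_card_chooseBasisIndex,
      IsIntegralClosure.rank ℤ_[p] ℚ_[p] K C, hd]
  let b : Module.Basis (Fin d) ℤ_[p] C :=
    (Module.Free.chooseBasis ℤ_[p] C).reindex (Fintype.equivFinOfCardEq hrank)
  haveI : IsLocalization (Algebra.algebraMapSubmonoid C (nonZeroDivisors ℤ_[p])) K :=
    IsIntegralClosure.isLocalization ℤ_[p] ℚ_[p] K C
  let bK : Module.Basis (Fin d) ℚ_[p] K := b.localizationLocalization ℚ_[p] (nonZeroDivisors ℤ_[p]) K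
  let F : K ≃L[ℚ_[p]] (Fin d → ℚ_[p]) := bK.equivFun.toContinuousLinearEquiv
  -- key compatibility
  have key : ∀ (x : C) (i : Fin d), F (x : K) i = ((b.repr x i : ℤ_[p]) : ℚ_[p]) := by
    intro x i
    have h1 : F (x : K) = bK.equivFun (x : K) :=
      congrFun (LinearEquiv.coe_toContinuousLinearEquiv' bK.equivFun) (x : K)
    rw [h1, Module.Basis.equivFun_apply]
    have h2 : (x : K) = algebraMap C K x := rfl
    rw [h2]
    rw [show bK.repr = (b.localizationLocalization ℚ_[p] (nonZeroDivisors ℤ_[p]) K).repr from rfl,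
      Module.Basis.localizationLocalization_repr_algebraMap]
    rfl
  have hcoe : @Isometry ℤ_[p] ℚ_[p] _ _ ((↑) : ℤ_[p] → ℚ_[p]) := isometry_subtype_coe
  refine ⟨b.equivFun.toAddEquiv, ?_, ?_⟩
  · refine continuous_pi fun i => ?_
    rw [← hcoe.comp_continuous_iff]
    have heq : ((↑) : ℤ_[p] → ℚ_[p]) ∘ (fun x : C => b.equivFun.toAddEquiv x i)
        = fun x : C => F (x : K) i := by
      funext x
      exact (key x i).symm
    erw [heq]
    exact (continuous_apply i).comp (F.continuous.comp continuous_subtype_val)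
  · have hind : Topology.IsInducing ((↑) : C → K) := ⟨rfl⟩
    rw [hind.continuous_iff]
    have heq : ((↑) : C → K) ∘ (fun y : Fin d → ℤ_[p] => b.equivFun.toAddEquiv.symm y)
        = fun y : Fin d → ℤ_[p] => F.symm (fun i => ((y i : ℤ_[p]) : ℚ_[p])) := by
      funext y
      apply F.injective
      rw [F.apply_symm_apply]
      funext i
      show F ((b.equivFun.symm y : C) : K) i = _
      rw [key]
      congr 1
      calc b.repr (b.equivFun.symm y) i = b.equivFun (b.equivFun.symm y) i := by
            rw [Module.Basis.equivFun_apply]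
        _ = y i := by rw [b.equivFun.apply_symm_apply]
    rw [heq]
    exact F.symm.continuous.comp (continuous_pi fun i =>
      hcoe.continuous.comp (continuous_apply i))
end

section
/- Let p be a prime and let W be a Weierstrass curve over ℤ_p, given by y² + a₁xy + a₃y = x³ + a₂x² + a₄x + a₆ with aᵢ ∈ ℤ_p, with nonzero discriminant Δ, and with additive reduction, i.e. p ∣ Δ and p ∣ c₄. Then there exists a variable change over ℤ_p, given by (u, r, s, t) with u ∈ ℤ_p^× and r, s, t ∈ ℤ_p (acting by x = u²x' + r, y = u³y' + u²sx' + t), such that the transformed Weierstrass curve has all of its coefficients a₁', a₂', a₃', a₄', a₆' in pℤ_p. -/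
open WeierstrassCurve PadicInt

private lemma padic_dvd_iff_toZMod_eq_zero (p : ℕ) [Fact p.Prime] (x : ℤ_[p]) :
    (p : ℤ_[p]) ∣ x ↔ PadicInt.toZMod x = 0 := by
  rw [← Ideal.mem_span_singleton, ← PadicInt.maximalIdeal_eq_span_p, ← PadicInt.ker_toZMod,
    RingHom.mem_ker]

private lemma padic_isUnit_natCast (p : ℕ) [hp : Fact p.Prime] (n : ℕ) (h : ¬ p ∣ n) :
    IsUnit (n : ℤ_[p]) := by
  by_contra hn
  have hmem : (n : ℤ_[p]) ∈ IsLocalRing.maximalIdeal ℤ_[p] := hn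
  rw [PadicInt.maximalIdeal_eq_span_p, Ideal.mem_span_singleton] at hmem
  rw [padic_dvd_iff_toZMod_eq_zero, map_natCast, ZMod.natCast_eq_zero_iff] at hmem
  exact h hmem

set_option maxRecDepth 8000 in
private lemma aux2 : ∀ a1 a2 a3 a4 a6 : ZMod 2,
    (WeierstrassCurve.mk a1 a2 a3 a4 a6).Δ = 0 →
    (WeierstrassCurve.mk a1 a2 a3 a4 a6).c₄ = 0 →
    ∃ r s t : ZMod 2,
      (WeierstrassCurve.VariableChange.mk 1 r s t • WeierstrassCurve.mk a1 a2 a3 a4 a6).a₁ = 0 ∧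
      (WeierstrassCurve.VariableChange.mk 1 r s t • WeierstrassCurve.mk a1 a2 a3 a4 a6).a₂ = 0 ∧
      (WeierstrassCurve.VariableChange.mk 1 r s t • WeierstrassCurve.mk a1 a2 a3 a4 a6).a₃ = 0 ∧
      (WeierstrassCurve.VariableChange.mk 1 r s t • WeierstrassCurve.mk a1 a2 a3 a4 a6).a₄ = 0 ∧
      (WeierstrassCurve.VariableChange.mk 1 r s t • WeierstrassCurve.mk a1 a2 a3 a4 a6).a₆ = 0 := by
  decide

set_option maxRecDepth 40000 in
private lemma aux3 : ∀ a1 a2 a3 a4 a6 : ZMod 3,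
    (WeierstrassCurve.mk a1 a2 a3 a4 a6).Δ = 0 →
    (WeierstrassCurve.mk a1 a2 a3 a4 a6).c₄ = 0 →
    ∃ r s t : ZMod 3,
      (WeierstrassCurve.VariableChange.mk 1 r s t • WeierstrassCurve.mk a1 a2 a3 a4 a6).a₁ = 0 ∧
      (WeierstrassCurve.VariableChange.mk 1 r s t • WeierstrassCurve.mk a1 a2 a3 a4 a6).a₂ = 0 ∧
      (WeierstrassCurve.VariableChange.mk 1 r s t • WeierstrassCurve.mk a1 a2 a3 a4 a6).a₃ = 0 ∧
      (WeierstrassCurve.VariableChange.mk 1 r s t • WeierstrassCurve.mk a1 a2 a3 a4 a6).a₄ = 0 ∧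
      (WeierstrassCurve.VariableChange.mk 1 r s t • WeierstrassCurve.mk a1 a2 a3 a4 a6).a₆ = 0 := by
  decide

/-- If we can kill all coefficients of the reduction modulo `p` by a variable change with
`u = 1`, then we can find a variable change over `ℤ_[p]` with all coefficients divisible
by `p`. -/
private lemma lift_aux (p : ℕ) [Fact p.Prime] (W : WeierstrassCurve ℤ_[p]) (r s t : ZMod p)
    (h : (WeierstrassCurve.VariableChange.mk 1 r s t • W.map PadicInt.toZMod).a₁ = 0 ∧
      (WeierstrassCurve.VariableChange.mk 1 r s t • W.map PadicInt.toZMod).a₂ = 0 ∧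
      (WeierstrassCurve.VariableChange.mk 1 r s t • W.map PadicInt.toZMod).a₃ = 0 ∧
      (WeierstrassCurve.VariableChange.mk 1 r s t • W.map PadicInt.toZMod).a₄ = 0 ∧
      (WeierstrassCurve.VariableChange.mk 1 r s t • W.map PadicInt.toZMod).a₆ = 0) :
    ∃ C : WeierstrassCurve.VariableChange ℤ_[p],
      (p : ℤ_[p]) ∣ (C • W).a₁ ∧
      (p : ℤ_[p]) ∣ (C • W).a₂ ∧
      (p : ℤ_[p]) ∣ (C • W).a₃ ∧
      (p : ℤ_[p]) ∣ (C • W).a₄ ∧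
      (p : ℤ_[p]) ∣ (C • W).a₆ := by
  refine ⟨⟨1, (r.val : ℤ_[p]), (s.val : ℤ_[p]), (t.val : ℤ_[p])⟩, ?_⟩
  have hC : (WeierstrassCurve.VariableChange.mk 1 (r.val : ℤ_[p]) (s.val : ℤ_[p])
      (t.val : ℤ_[p])).map PadicInt.toZMod = ⟨1, r, s, t⟩ := by
    ext
    · simp [WeierstrassCurve.VariableChange.map]
    · show PadicInt.toZMod ((r.val : ℕ) : ℤ_[p]) = r
      rw [map_natCast, ZMod.natCast_val, ZMod.cast_id]
    · show PadicInt.toZMod ((s.val : ℕ) : ℤ_[p]) = s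
      rw [map_natCast, ZMod.natCast_val, ZMod.cast_id]
    · show PadicInt.toZMod ((t.val : ℕ) : ℤ_[p]) = t
      rw [map_natCast, ZMod.natCast_val, ZMod.cast_id]
  have hmap := WeierstrassCurve.map_variableChange (W := W) (φ := PadicInt.toZMod)
    (C := ⟨1, (r.val : ℤ_[p]), (s.val : ℤ_[p]), (t.val : ℤ_[p])⟩)
  rw [hC] at hmap
  simp only [padic_dvd_iff_toZMod_eq_zero]
  refine ⟨?_, ?_, ?_, ?_, ?_⟩
  · show ((_ • W).map PadicInt.toZMod).a₁ = 0
    rw [← hmap]; exact h.1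
  · show ((_ • W).map PadicInt.toZMod).a₂ = 0
    rw [← hmap]; exact h.2.1
  · show ((_ • W).map PadicInt.toZMod).a₃ = 0
    rw [← hmap]; exact h.2.2.1
  · show ((_ • W).map PadicInt.toZMod).a₄ = 0
    rw [← hmap]; exact h.2.2.2.1
  · show ((_ • W).map PadicInt.toZMod).a₆ = 0
    rw [← hmap]; exact h.2.2.2.2

/-- If `W` is a Weierstrass curve over `ℤ_p` with nonzero discriminant and additive
reduction (i.e. `p ∣ Δ` and `p ∣ c₄`), then there is a change of variables `(u, r, s, t)`
over `ℤ_p` with `u` a unit such that the transformed Weierstrass curve has all of its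
coefficients in `pℤ_p`. -/
theorem exists_variableChange_coeffs_dvd (p : ℕ) [Fact p.Prime]
    (W : WeierstrassCurve ℤ_[p]) (hΔ : W.Δ ≠ 0)
    (hΔdvd : (p : ℤ_[p]) ∣ W.Δ) (hc₄ : (p : ℤ_[p]) ∣ W.c₄) :
    ∃ C : WeierstrassCurve.VariableChange ℤ_[p],
      (p : ℤ_[p]) ∣ (C • W).a₁ ∧
      (p : ℤ_[p]) ∣ (C • W).a₂ ∧
      (p : ℤ_[p]) ∣ (C • W).a₃ ∧
      (p : ℤ_[p]) ∣ (C • W).a₄ ∧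
      (p : ℤ_[p]) ∣ (C • W).a₆ := by
  have hΔ0 : (W.map PadicInt.toZMod).Δ = 0 := by
    rw [WeierstrassCurve.map_Δ, ← padic_dvd_iff_toZMod_eq_zero]; exact hΔdvd
  have hc₄0 : (W.map PadicInt.toZMod).c₄ = 0 := by
    rw [WeierstrassCurve.map_c₄, ← padic_dvd_iff_toZMod_eq_zero]; exact hc₄
  by_cases hp2 : p = 2
  · subst hp2
    obtain ⟨r, s, t, h⟩ := aux2 (W.map PadicInt.toZMod).a₁ (W.map PadicInt.toZMod).a₂
      (W.map PadicInt.toZMod).a₃ (W.map PadicInt.toZMod).a₄ (W.map PadicInt.toZMod).a₆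
      hΔ0 hc₄0
    exact lift_aux 2 W r s t h
  by_cases hp3 : p = 3
  · subst hp3
    obtain ⟨r, s, t, h⟩ := aux3 (W.map PadicInt.toZMod).a₁ (W.map PadicInt.toZMod).a₂
      (W.map PadicInt.toZMod).a₃ (W.map PadicInt.toZMod).a₄ (W.map PadicInt.toZMod).a₆
      hΔ0 hc₄0
    exact lift_aux 3 W r s t h
  -- now `p ≥ 5`, so 2 and 3 are units in `ℤ_[p]`
  have hp : p.Prime := Fact.out
  have h2 : IsUnit (2 : ℤ_[p]) := by
    refine padic_isUnit_natCast p 2 fun h => hp2 ?_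
    exact (Nat.prime_dvd_prime_iff_eq hp Nat.prime_two).mp h
  have h3 : IsUnit (3 : ℤ_[p]) := by
    refine padic_isUnit_natCast p 3 fun h => hp3 ?_
    exact (Nat.prime_dvd_prime_iff_eq hp Nat.prime_three).mp h
  haveI := h2.invertible
  haveI := h3.invertible
  refine ⟨W.toShortNF, ?_⟩
  set W' := W.toShortNF • W with hW'
  haveI : W'.IsShortNF := W.toShortNF_spec
  have hprime : Prime ((p : ℕ) : ℤ_[p]) := PadicInt.prime_p
  have hnot : ∀ n : ℤ_[p], IsUnit n → ¬ (p : ℤ_[p]) ∣ n := fun n hn hd =>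
    hprime.not_unit (isUnit_of_dvd_unit hd hn)
  have h48 : IsUnit (48 : ℤ_[p]) := by
    have : (48 : ℤ_[p]) = 2 ^ 4 * 3 := by norm_num
    rw [this]; exact (h2.pow 4).mul h3
  have h16 : IsUnit (16 : ℤ_[p]) := by
    have : (16 : ℤ_[p]) = 2 ^ 4 := by norm_num
    rw [this]; exact h2.pow 4
  have h27 : IsUnit (27 : ℤ_[p]) := by
    have : (27 : ℤ_[p]) = 3 ^ 3 := by norm_num
    rw [this]; exact h3.pow 3
  -- p divides c₄ and Δ of W'
  have hc₄' : (p : ℤ_[p]) ∣ W'.c₄ := by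
    rw [hW', WeierstrassCurve.variableChange_c₄]; exact hc₄.mul_left _
  have hΔ' : (p : ℤ_[p]) ∣ W'.Δ := by
    rw [hW', WeierstrassCurve.variableChange_Δ]; exact hΔdvd.mul_left _
  rw [W'.c₄_of_isShortNF] at hc₄'
  have ha₄ : (p : ℤ_[p]) ∣ W'.a₄ := by
    have : (-48 : ℤ_[p]) * W'.a₄ = -(48 * W'.a₄) := by ring
    rw [this, dvd_neg] at hc₄'
    rcases hprime.dvd_mul.mp hc₄' with h | h
    · exact absurd h (hnot _ h48)
    · exact h
  have ha₆ : (p : ℤ_[p]) ∣ W'.a₆ := by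
    rw [W'.Δ_of_isShortNF] at hΔ'
    have hΔ'' : (p : ℤ_[p]) ∣ 16 * (4 * W'.a₄ ^ 3 + 27 * W'.a₆ ^ 2) := by
      have : (16 : ℤ_[p]) * (4 * W'.a₄ ^ 3 + 27 * W'.a₆ ^ 2) =
          -(-16 * (4 * W'.a₄ ^ 3 + 27 * W'.a₆ ^ 2)) := by ring
      rw [this, dvd_neg]; exact hΔ'
    have hsum : (p : ℤ_[p]) ∣ 4 * W'.a₄ ^ 3 + 27 * W'.a₆ ^ 2 := by
      rcases hprime.dvd_mul.mp hΔ'' with h | h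
      · exact absurd h (hnot _ h16)
      · exact h
    have h4a : (p : ℤ_[p]) ∣ 4 * W'.a₄ ^ 3 := Dvd.dvd.mul_left (ha₄.trans (dvd_pow_self _ (by norm_num))) _
    have h27a : (p : ℤ_[p]) ∣ 27 * W'.a₆ ^ 2 := by
      have := dvd_sub hsum h4a
      simpa using this
    have ha₆sq : (p : ℤ_[p]) ∣ W'.a₆ ^ 2 := by
      rcases hprime.dvd_mul.mp h27a with h | h
      · exact absurd h (hnot _ h27)
      · exact h
    exact hprime.dvd_of_dvd_pow ha₆sq
  refine ⟨?_, ?_, ?_, ha₄, ha₆⟩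
  · rw [W'.a₁_of_isShortNF]; exact dvd_zero _
  · rw [W'.a₂_of_isShortNF]; exact dvd_zero _
  · rw [W'.a₃_of_isShortNF]; exact dvd_zero _
end

section
/- Consider the Weierstrass curve W : y² + 7xy − 28y = x³ + 7x − 35 over ℚ (i.e. a₁ = 7, a₂ = 0, a₃ = −28, a₄ = 7, a₆ = −35). Then: the discriminant Δ of W is nonzero; 7 ∣ Δ and 7 ∣ c₄ (so W has additive reduction at 7); the point P = (2,1) lies on W and has exact order 7 in the group of points W(ℚ); and, regarding P as a point of W over ℚ₇, the reduction of P modulo 7 is a nonsingular point of the reduction of W modulo 7 (so P lies in E₀(ℚ₇)). -/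
open WeierstrassCurve

/-- The Weierstrass curve `y² + 7xy + (-28)y = x³ + 0x² + 7x + (-35)` over `ℤ`. -/
def Wint : WeierstrassCurve ℤ := ⟨7, 0, (-28), 7, (-35)⟩

/-- The same Weierstrass curve, base changed to `ℚ`. -/
def Wrat : WeierstrassCurve ℚ := Wint.map (Int.castRingHom ℚ)

/-- The reduction of the curve modulo `7`. -/
def Wbar : WeierstrassCurve (ZMod 7) := Wint.map (Int.castRingHom (ZMod 7))

lemma Wrat_a₁ : Wrat.a₁ = 7 := by norm_num [Wrat, Wint]
lemma Wrat_a₂ : Wrat.a₂ = 0 := by norm_num [Wrat, Wint]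
lemma Wrat_a₃ : Wrat.a₃ = -28 := by norm_num [Wrat, Wint]
lemma Wrat_a₄ : Wrat.a₄ = 7 := by norm_num [Wrat, Wint]
lemma Wrat_a₆ : Wrat.a₆ = -35 := by norm_num [Wrat, Wint]

lemma Wrat_negY (x y : ℚ) : Wrat.toAffine.negY x y = -y - 7 * x + 28 := by
  simp [Affine.negY, Wrat_a₁, Wrat_a₃]

lemma wrat_ns (x y : ℚ) (heq : y ^ 2 + 7 * x * y - 28 * y = x ^ 3 + 7 * x - 35)
    (hns : ¬(7 * y = 3 * x ^ 2 + 7 ∧ 2 * y + 7 * x - 28 = 0)) :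
    Wrat.toAffine.Nonsingular x y := by
  rw [Affine.nonsingular_iff, Affine.equation_iff]
  simp only [Wrat_a₁, Wrat_a₂, Wrat_a₃, Wrat_a₄, Wrat_a₆]
  constructor
  · linear_combination heq
  · rcases not_and_or.mp hns with h | h
    · left; intro hc; exact h (by linarith)
    · right; intro hc; exact h (by linarith)

lemma hP : Wrat.toAffine.Nonsingular 2 1 := by apply wrat_ns <;> norm_num
lemma hQ2 : Wrat.toAffine.Nonsingular (-10) 85 := by apply wrat_ns <;> norm_num
lemma hQ3 : Wrat.toAffine.Nonsingular 8 13 := by apply wrat_ns <;> norm_num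
lemma hQ4 : Wrat.toAffine.Nonsingular 8 (-41) := by apply wrat_ns <;> norm_num

lemma some_congr {F : Type*} [Field F] {W : Affine F} {x y x' y' : F}
    (hx : x = x') (hy : y = y') {h : W.Nonsingular x y} (h' : W.Nonsingular x' y') :
    Affine.Point.some _ _ h = Affine.Point.some _ _ h' := by subst hx; subst hy; rfl

lemma e2 : Affine.Point.some _ _ hP + Affine.Point.some _ _ hP = Affine.Point.some _ _ hQ2 := by
  have hy : (1 : ℚ) ≠ Wrat.toAffine.negY 2 1 := by rw [Wrat_negY]; norm_num
  rw [Affine.Point.add_self_of_Y_ne hy]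
  apply some_congr _ _
  · rw [Affine.addX, Affine.slope_of_Y_ne rfl hy, Wrat_negY, Wrat_a₁, Wrat_a₂, Wrat_a₄]
    norm_num
  · rw [Affine.addY, Affine.negAddY, Wrat_negY, Affine.addX,
      Affine.slope_of_Y_ne rfl hy, Wrat_negY, Wrat_a₁, Wrat_a₂, Wrat_a₄]
    norm_num

lemma e3 : Affine.Point.some _ _ hP + Affine.Point.some _ _ hQ2 = Affine.Point.some _ _ hQ3 := by
  have hx : (2 : ℚ) ≠ -10 := by norm_num
  rw [Affine.Point.add_of_X_ne hx]
  apply some_congr _ _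
  · rw [Affine.addX, Affine.slope_of_X_ne hx, Wrat_a₁, Wrat_a₂]
    norm_num
  · rw [Affine.addY, Affine.negAddY, Wrat_negY, Affine.addX,
      Affine.slope_of_X_ne hx, Wrat_a₁, Wrat_a₂]
    norm_num

lemma e4 : Affine.Point.some _ _ hQ2 + Affine.Point.some _ _ hQ2 = Affine.Point.some _ _ hQ4 := by
  have hy : (85 : ℚ) ≠ Wrat.toAffine.negY (-10) 85 := by rw [Wrat_negY]; norm_num
  rw [Affine.Point.add_self_of_Y_ne hy]
  apply some_congr _ _
  · rw [Affine.addX, Affine.slope_of_Y_ne rfl hy, Wrat_negY, Wrat_a₁, Wrat_a₂, Wrat_a₄]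
    norm_num
  · rw [Affine.addY, Affine.negAddY, Wrat_negY, Affine.addX,
      Affine.slope_of_Y_ne rfl hy, Wrat_negY, Wrat_a₁, Wrat_a₂, Wrat_a₄]
    norm_num

lemma e7 : Affine.Point.some _ _ hQ3 + Affine.Point.some _ _ hQ4 = 0 := by
  apply Affine.Point.add_of_Y_eq rfl
  rw [Wrat_negY]; norm_num

/-- The curve has nonzero discriminant, additive reduction at `7` (i.e. `7 ∣ Δ` and
`7 ∣ c₄`), the point `P = (2, 1)` lies on it and has exact order `7` in the group
of rational points, and the reduction of `P` modulo `7` is a nonsingular point of the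
reduction of the curve modulo `7` (so `P` lies in `E₀(ℚ_7)`). -/
theorem example_curve_p7 :
    Wint.Δ ≠ 0 ∧ (7 : ℤ) ∣ Wint.Δ ∧ (7 : ℤ) ∣ Wint.c₄ ∧
    (∃ h : Wrat.toAffine.Nonsingular 2 1,
      addOrderOf (WeierstrassCurve.Affine.Point.some _ _ h) = 7) ∧
    Wbar.toAffine.Nonsingular 2 1 := by
  refine ⟨?_, ?_, ?_, ⟨hP, ?_⟩, ?_⟩
  · decide
  · decide
  · decide
  · have h7 : (7 : ℕ) • Affine.Point.some _ _ hP = 0 := by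
      have : (7 : ℕ) • Affine.Point.some _ _ hP =
          (Affine.Point.some _ _ hP + (Affine.Point.some _ _ hP + Affine.Point.some _ _ hP)) +
          ((Affine.Point.some _ _ hP + Affine.Point.some _ _ hP) +
            (Affine.Point.some _ _ hP + Affine.Point.some _ _ hP)) := by abel
      rw [this, e2, e3, e4, e7]
    haveI : Fact (Nat.Prime 7) := ⟨by norm_num⟩
    exact addOrderOf_eq_prime h7 (by simp)
  · rw [Affine.nonsingular_iff, Affine.equation_iff]
    decide
end

section
/- Let p be a prime, d ≥ 1, and let v ∈ ℤ_p^d with v ∉ pℤ_p^d. Let X_v ⊆ ℚ_p^d be the subgroup generated by ℤ_p^d together with the element v/p, equipped with the subspace topology from ℚ_p^d. Then X_v is topologically isomorphic to ℤ_p^d, the subgroup ℤ_p^d ⊆ X_v has index p in X_v, and the quotient X_v/ℤ_p^d is isomorphic to ℤ/pℤ. -/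
/-- The subgroup `ℤ_p^d` of the additive group `ℚ_p^d`: vectors all of whose
coordinates are `p`-adic integers. -/
noncomputable def Zpd (p : ℕ) [Fact p.Prime] (d : ℕ) : AddSubgroup (Fin d → ℚ_[p]) :=
  AddSubgroup.pi Set.univ fun _ => (PadicInt.subring p).toAddSubgroup

/-- For `v ∈ ℤ_p^d`, the subgroup `X_v` of `ℚ_p^d` generated by `ℤ_p^d` and `v/p`. -/
noncomputable def Xv (p : ℕ) [Fact p.Prime] (d : ℕ) (v : Fin d → ℤ_[p]) :
    AddSubgroup (Fin d → ℚ_[p]) :=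
  Zpd p d ⊔ AddSubgroup.zmultiples (fun i => (v i : ℚ_[p]) / p)

namespace XvProof

variable {p : ℕ} [Fact p.Prime] {d : ℕ}

lemma hp0 : (p : ℚ_[p]) ≠ 0 :=
  Nat.cast_ne_zero.mpr (Fact.out : p.Prime).ne_zero

lemma mem_Zpd_iff {x : Fin d → ℚ_[p]} : x ∈ Zpd p d ↔ ∀ i, ‖x i‖ ≤ 1 := by
  simp [Zpd, AddSubgroup.mem_pi]

lemma coe_mem_Zpd (z : Fin d → ℤ_[p]) : (fun i => (z i : ℚ_[p])) ∈ Zpd p d := by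
  rw [mem_Zpd_iff]
  intro i
  rw [← PadicInt.norm_def]
  exact PadicInt.norm_le_one _

variable (v : Fin d → ℤ_[p])

lemma smul_w_mem (a : ℤ_[p]) :
    (fun i => (a : ℚ_[p]) * ((v i : ℚ_[p]) / p)) ∈ Xv p d v := by
  obtain ⟨b, hb⟩ := Ideal.mem_span_singleton.mp (PadicInt.appr_spec 1 a)
  have ha : (a : ℚ_[p]) = (a.appr 1 : ℚ_[p]) + p * b := by
    have := congrArg (fun z : ℤ_[p] => (z : ℚ_[p])) hb
    push_cast at this
    linear_combination this
  have hp : (p : ℚ_[p]) ≠ 0 := hp0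
  have key : (fun i => (a : ℚ_[p]) * ((v i : ℚ_[p]) / p))
      = (fun i => ((b * v i : ℤ_[p]) : ℚ_[p]))
        + (a.appr 1 : ℤ) • (fun i => (v i : ℚ_[p]) / p) := by
    funext i
    simp only [Pi.add_apply, Pi.smul_apply, zsmul_eq_mul, Pi.mul_apply, Pi.intCast_apply]
    rw [ha]
    push_cast
    field_simp
    ring
  rw [key]
  exact AddSubgroup.add_mem _
    (AddSubgroup.mem_sup_left (coe_mem_Zpd _))
    (AddSubgroup.mem_sup_right (AddSubgroup.mem_zmultiples_iff.mpr ⟨_, rfl⟩))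

lemma mem_Xv_elim {x : Fin d → ℚ_[p]} (hx : x ∈ Xv p d v) :
    ∃ y : Fin d → ℤ_[p], ∃ n : ℤ,
      x = (fun i => (y i : ℚ_[p])) + n • (fun i => (v i : ℚ_[p]) / p) := by
  rw [Xv, AddSubgroup.mem_sup] at hx
  obtain ⟨y, hy, z, hz, hsum⟩ := hx
  obtain ⟨n, rfl⟩ := AddSubgroup.mem_zmultiples_iff.mp hz
  exact ⟨fun i => ⟨y i, mem_Zpd_iff.mp hy i⟩, n, hsum.symm⟩

variable (i₀ : Fin d) (uin : ℤ_[p])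

/-- The coefficient vector of the "inverse" change of coordinates. -/
noncomputable def cc (j : Fin d) : ℚ_[p] :=
  if j = i₀ then (p : ℚ_[p]) - 1 else -((uin : ℚ_[p]) * (v j : ℚ_[p]))

/-- The map sending `X_v` onto `ℤ_p^d`. -/
noncomputable def S (x : Fin d → ℚ_[p]) (j : Fin d) : ℚ_[p] :=
  x j + x i₀ * cc v i₀ uin j

/-- The coefficient vector of the "forward" change of coordinates. -/
noncomputable def dd (j : Fin d) : ℚ_[p] :=
  (uin : ℚ_[p]) * (v j : ℚ_[p]) / p - (if j = i₀ then 1 else 0)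

/-- The map sending `ℤ_p^d` onto `X_v`. -/
noncomputable def T (x : Fin d → ℚ_[p]) (j : Fin d) : ℚ_[p] :=
  x j + x i₀ * dd v i₀ uin j

lemma huin' (huin : uin * v i₀ = 1) : (uin : ℚ_[p]) * (v i₀ : ℚ_[p]) = 1 := by
  exact_mod_cast congrArg (fun z : ℤ_[p] => (z : ℚ_[p])) huin

lemma T_S (huin : uin * v i₀ = 1) (x : Fin d → ℚ_[p]) : T v i₀ uin (S v i₀ uin x) = x := by
  have h1 := huin' v i₀ uin huin
  have hp : (p : ℚ_[p]) ≠ 0 := hp0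
  funext j
  simp only [T, S, cc, dd, if_pos rfl, if_true]
  rcases eq_or_ne j i₀ with h | h
  · subst h
    simp only [if_pos rfl, if_true]
    field_simp
    linear_combination (x j * (p : ℚ_[p])) * h1
  · simp only [if_neg h]
    field_simp
    ring

lemma S_T (huin : uin * v i₀ = 1) (x : Fin d → ℚ_[p]) : S v i₀ uin (T v i₀ uin x) = x := by
  have h1 := huin' v i₀ uin huin
  have hp : (p : ℚ_[p]) ≠ 0 := hp0
  funext j
  simp only [T, S, cc, dd, if_pos rfl, if_true]
  rcases eq_or_ne j i₀ with h | h
  · subst h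
    simp only [if_pos rfl, if_true]
    field_simp
    linear_combination (x j * (p : ℚ_[p])) * h1
  · simp only [if_neg h]
    field_simp
    linear_combination (-(x i₀ * (uin : ℚ_[p]) * (v j : ℚ_[p]))) * h1

lemma S_coe_eq (huin : uin * v i₀ = 1) {x : Fin d → ℚ_[p]} (hx : x ∈ Xv p d v) (j : Fin d) :
    ∃ z : ℤ_[p], S v i₀ uin x j = (z : ℚ_[p]) := by
  have h1 := huin' v i₀ uin huin
  have hp : (p : ℚ_[p]) ≠ 0 := hp0
  obtain ⟨y, n, rfl⟩ := mem_Xv_elim v hx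
  refine ⟨y j + y i₀ * (if j = i₀ then (p : ℤ_[p]) - 1 else -(uin * v j))
      + n * (if j = i₀ then v i₀ else 0), ?_⟩
  simp only [S, cc, Pi.add_apply, Pi.smul_apply, zsmul_eq_mul, Pi.mul_apply, Pi.intCast_apply]
  rcases eq_or_ne j i₀ with h | h
  · subst h
    simp only [if_pos rfl]
    push_cast
    field_simp
    ring
  · simp only [if_neg h]
    push_cast
    field_simp
    linear_combination (-(n : ℚ_[p]) * (v j : ℚ_[p])) * h1

lemma S_mem (huin : uin * v i₀ = 1) {x : Fin d → ℚ_[p]} (hx : x ∈ Xv p d v) (j : Fin d) :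
    ‖S v i₀ uin x j‖ ≤ 1 := by
  obtain ⟨z, hz⟩ := S_coe_eq v i₀ uin huin hx j
  rw [hz, ← PadicInt.norm_def]
  exact PadicInt.norm_le_one _

lemma T_mem (z : Fin d → ℤ_[p]) :
    (T v i₀ uin fun i => (z i : ℚ_[p])) ∈ Xv p d v := by
  have hp : (p : ℚ_[p]) ≠ 0 := hp0
  have key : (T v i₀ uin fun i => (z i : ℚ_[p]))
      = (fun j => ((z j - if j = i₀ then z i₀ else 0 : ℤ_[p]) : ℚ_[p]))
        + fun i => ((z i₀ * uin : ℤ_[p]) : ℚ_[p]) * ((v i : ℚ_[p]) / p) := by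
    funext j
    simp only [T, dd, Pi.add_apply]
    rcases eq_or_ne j i₀ with h | h
    · subst h
      simp only [if_pos rfl]
      push_cast
      field_simp
      ring
    · simp only [if_neg h]
      push_cast
      field_simp
      ring
  rw [key]
  exact AddSubgroup.add_mem _
    (AddSubgroup.mem_sup_left (coe_mem_Zpd _))
    (smul_w_mem v _)

/-- The topological isomorphism `X_v ≃ ℤ_p^d`. -/
noncomputable def eAux (huin : uin * v i₀ = 1) : (Xv p d v) ≃+ (Fin d → ℤ_[p]) where
  toFun x j := ⟨S v i₀ uin x.1 j, S_mem v i₀ uin huin x.2 j⟩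
  invFun z := ⟨T v i₀ uin fun i => (z i : ℚ_[p]), T_mem v i₀ uin z⟩
  left_inv x := by
    apply Subtype.ext
    exact T_S v i₀ uin huin x.1
  right_inv z := by
    funext j
    apply Subtype.ext
    exact congrFun (S_T v i₀ uin huin fun i => (z i : ℚ_[p])) j
  map_add' x y := by
    funext j
    apply Subtype.ext
    show S v i₀ uin (x.1 + y.1) j = S v i₀ uin x.1 j + S v i₀ uin y.1 j
    simp only [S, Pi.add_apply]
    ring

lemma coe_eAux_apply (x : Xv p d v) (j : Fin d) :
    ((eAux v i₀ uin huin x j : ℚ_[p])) = S v i₀ uin x.1 j := rfl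

lemma isometry_coe : Isometry (fun z : ℤ_[p] => (z : ℚ_[p])) := by
  apply Isometry.of_dist_eq
  intro a b
  rw [dist_eq_norm, dist_eq_norm, PadicInt.norm_def]
  push_cast
  rfl

lemma mem_Zpd_of_dvd (huin : uin * v i₀ = 1) {x : Fin d → ℚ_[p]} (hx : x ∈ Xv p d v) {m : ℤ_[p]}
    (hm : S v i₀ uin x i₀ = (p : ℚ_[p]) * m) : x ∈ Zpd p d := by
  have hp : (p : ℚ_[p]) ≠ 0 := hp0
  rw [mem_Zpd_iff]
  intro j
  have hxj : x j = S v i₀ uin x j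
      + ((m * (uin * v j - if j = i₀ then (p : ℤ_[p]) else 0) : ℤ_[p]) : ℚ_[p]) := by
    conv_lhs => rw [← T_S v i₀ uin huin x]
    show S v i₀ uin x j + S v i₀ uin x i₀ * dd v i₀ uin j = _
    rw [hm]
    simp only [dd]
    rcases eq_or_ne j i₀ with h | h
    · subst h
      simp only [if_pos rfl]
      push_cast
      field_simp
    · simp only [if_neg h]
      push_cast
      field_simp
      ring
  rw [hxj]
  refine le_trans (Padic.nonarchimedean _ _) (max_le (S_mem v i₀ uin huin hx j) ?_)
  rw [← PadicInt.norm_def]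
  exact PadicInt.norm_le_one _

lemma dvd_eAux_iff (huin : uin * v i₀ = 1) (x : Xv p d v) :
    (p : ℤ_[p]) ∣ eAux v i₀ uin huin x i₀ ↔ (x : Fin d → ℚ_[p]) ∈ Zpd p d := by
  constructor
  · rintro ⟨m, hm⟩
    have hm' : S v i₀ uin x.1 i₀ = (p : ℚ_[p]) * m := by
      have := congrArg (fun z : ℤ_[p] => (z : ℚ_[p])) hm
      push_cast at this
      exact this
    exact mem_Zpd_of_dvd v i₀ uin huin x.2 hm'
  · intro hx
    refine ⟨⟨x.1 i₀, mem_Zpd_iff.mp hx i₀⟩ * (1 + (p : ℤ_[p]) * 0), ?_⟩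
    apply Subtype.ext
    show S v i₀ uin x.1 i₀ = _
    simp only [S, cc, if_pos rfl]
    change _ = (p : ℚ_[p]) * ((x.1 i₀ : ℚ_[p]) * (((1 + (p : ℤ_[p]) * 0 : ℤ_[p])) : ℚ_[p]))
    push_cast
    ring

end XvProof

set_option synthInstance.maxHeartbeats 1000000 in
open XvProof in
/-- If `v ∈ ℤ_p^d` with `v ∉ pℤ_p^d`, then `X_v = ℤ_p^d + ⟨v/p⟩ ⊆ ℚ_p^d`, with the
subspace topology, is topologically isomorphic to `ℤ_p^d`; the subgroup `ℤ_p^d` has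
index `p` in `X_v`, and the quotient `X_v/ℤ_p^d` is isomorphic to `ℤ/pℤ`. -/
theorem Xv_topIso_Zpd (p : ℕ) [Fact p.Prime] (d : ℕ) (hd : 1 ≤ d)
    (v : Fin d → ℤ_[p]) (hv : ¬ ∀ i, (p : ℤ_[p]) ∣ v i) :
    (∃ e : Xv p d v ≃+ (Fin d → ℤ_[p]), Continuous e ∧ Continuous e.symm) ∧
    ((Zpd p d).addSubgroupOf (Xv p d v)).index = p ∧
    Nonempty ((Xv p d v ⧸ (Zpd p d).addSubgroupOf (Xv p d v)) ≃+ ZMod p) := by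
  push_neg at hv
  obtain ⟨i₀, hi₀⟩ := hv
  have hu : IsUnit (v i₀) := by
    rw [PadicInt.isUnit_iff]
    rcases lt_or_eq_of_le (PadicInt.norm_le_one (v i₀)) with h | h
    · exact absurd ((PadicInt.norm_lt_one_iff_dvd _).mp h) hi₀
    · exact h
  obtain ⟨uin, huin⟩ := hu.exists_left_inv
  set e := eAux v i₀ uin huin with he
  have hInd : Topology.IsInducing (fun z : ℤ_[p] => (z : ℚ_[p])) :=
    (isometry_coe (p := p)).isUniformInducing.isInducing
  have hcont : Continuous e := by
    apply continuous_pi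
    intro j
    rw [hInd.continuous_iff]
    show Continuous fun x : Xv p d v => S v i₀ uin x.1 j
    exact ((continuous_apply j).comp continuous_subtype_val).add
      ((((continuous_apply i₀).comp continuous_subtype_val)).mul continuous_const)
  have hcont' : Continuous e.symm := by
    apply Continuous.subtype_mk
    apply continuous_pi
    intro j
    show Continuous fun z : Fin d → ℤ_[p] =>
      ((z j : ℚ_[p]) + (z i₀ : ℚ_[p]) * dd v i₀ uin j)
    exact ((hInd.continuous.comp (continuous_apply j)).add
      ((hInd.continuous.comp (continuous_apply i₀)).mul continuous_const))
  refine ⟨⟨e, hcont, hcont'⟩, ?_⟩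
  -- the quotient map
  have hkerZ : ∀ z : ℤ_[p], PadicInt.toZMod z = 0 ↔ (p : ℤ_[p]) ∣ z := by
    intro z
    rw [← RingHom.mem_ker, PadicInt.ker_toZMod, PadicInt.maximalIdeal_eq_span_p,
      Ideal.mem_span_singleton]
  set φ : Xv p d v →+ ZMod p :=
    AddMonoidHom.mk' (fun x => PadicInt.toZMod (e x i₀))
      (fun a b => by
      show PadicInt.toZMod (e (a + b) i₀)
          = PadicInt.toZMod (e a i₀) + PadicInt.toZMod (e b i₀)
      rw [map_add e a b, Pi.add_apply, RingHom.map_add]) with hφ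
  have hker : φ.ker = (Zpd p d).addSubgroupOf (Xv p d v) := by
    ext x
    rw [AddMonoidHom.mem_ker, AddSubgroup.mem_addSubgroupOf]
    show PadicInt.toZMod (e x i₀) = 0 ↔ _
    rw [hkerZ, he, dvd_eAux_iff]
  have hsurj : Function.Surjective φ := by
    intro k
    refine ⟨e.symm (fun _ => ((k.val : ℕ) : ℤ_[p])), ?_⟩
    show PadicInt.toZMod (e (e.symm _) i₀) = k
    rw [AddEquiv.apply_symm_apply]
    rw [map_natCast, ZMod.natCast_val, ZMod.cast_id]
  have quotEquiv : (Xv p d v ⧸ (Zpd p d).addSubgroupOf (Xv p d v)) ≃+ ZMod p := by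
    rw [← hker]
    exact QuotientAddGroup.quotientKerEquivOfSurjective φ hsurj
  constructor
  · rw [AddSubgroup.index_eq_card, Nat.card_congr quotEquiv.toEquiv,
      Nat.card_eq_fintype_card, ZMod.card]
  · exact ⟨quotEquiv⟩
end

section
/- Let p be a prime, d ≥ 1, and let v, w ∈ ℤ_p^d with v ∉ pℤ_p^d and w ∉ pℤ_p^d. Let X_v ⊆ ℚ_p^d be the subgroup generated by ℤ_p^d and v/p, and X_w ⊆ ℚ_p^d the subgroup generated by ℤ_p^d and w/p, and let f_v : X_v → ℤ/pℤ (resp. f_w : X_w → ℤ/pℤ) be the unique group homomorphism that is trivial on ℤ_p^d and sends v/p (resp. w/p) to 1. If there exists a group isomorphism φ : X_v → X_w that restricts to the identity on ℤ_p^d and satisfies f_w ∘ φ = f_v, then v ≡ w (mod pℤ_p^d). -/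
/-- Let `v, w ∈ ℤ_p^d` with `v, w ∉ pℤ_p^d`, and let `f_v : X_v → ℤ/pℤ` (resp.
`f_w : X_w → ℤ/pℤ`) be the homomorphism vanishing on `ℤ_p^d` and sending `v/p` (resp.
`w/p`) to `1`. If there is a group isomorphism `φ : X_v ≃ X_w` restricting to the identity
on `ℤ_p^d` with `f_w ∘ φ = f_v`, then `v ≡ w (mod pℤ_p^d)`. -/
theorem equiv_extensions_congr (p : ℕ) [Fact p.Prime] (d : ℕ) (hd : 1 ≤ d)
    (v w : Fin d → ℤ_[p])
    (hv : ¬ ∀ i, (p : ℤ_[p]) ∣ v i) (hw : ¬ ∀ i, (p : ℤ_[p]) ∣ w i)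
    (fv : Xv p d v →+ ZMod p) (fw : Xv p d w →+ ZMod p)
    (hfv0 : ∀ x : Xv p d v, (x : Fin d → ℚ_[p]) ∈ Zpd p d → fv x = 0)
    (hfv1 : ∀ x : Xv p d v, (x : Fin d → ℚ_[p]) = (fun i => (v i : ℚ_[p]) / p) → fv x = 1)
    (hfw0 : ∀ y : Xv p d w, (y : Fin d → ℚ_[p]) ∈ Zpd p d → fw y = 0)
    (hfw1 : ∀ y : Xv p d w, (y : Fin d → ℚ_[p]) = (fun i => (w i : ℚ_[p]) / p) → fw y = 1)
    (φ : Xv p d v ≃+ Xv p d w)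
    (hφ_id : ∀ x : Xv p d v, (x : Fin d → ℚ_[p]) ∈ Zpd p d →
      (φ x : Fin d → ℚ_[p]) = (x : Fin d → ℚ_[p]))
    (hφ_comm : ∀ x : Xv p d v, fw (φ x) = fv x) :
    ∀ i, (p : ℤ_[p]) ∣ (v i - w i) := by
  have hp0 : (p : ℚ_[p]) ≠ 0 := Nat.cast_ne_zero.mpr (Fact.out (p := p.Prime)).ne_zero
  -- the element v/p of X_v
  have hxmem : (fun i => (v i : ℚ_[p]) / p) ∈ Xv p d v :=
    (le_sup_right : _ ≤ Xv p d v) (AddSubgroup.mem_zmultiples _)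
  set x : Xv p d v := ⟨_, hxmem⟩ with hxdef
  -- decompose φ x
  obtain ⟨z, hz, b, hb, hzb⟩ := AddSubgroup.mem_sup.mp (φ x).2
  obtain ⟨k, hk⟩ := AddSubgroup.mem_zmultiples_iff.mp hb
  -- f_w (φ x) = k
  have hgmem : (fun i => (w i : ℚ_[p]) / p) ∈ Xv p d w :=
    (le_sup_right : _ ≤ Xv p d w) (AddSubgroup.mem_zmultiples _)
  have hzmem : z ∈ Xv p d w := (le_sup_left : Zpd p d ≤ Xv p d w) hz
  have hsplit : φ x = ⟨z, hzmem⟩ + k • (⟨_, hgmem⟩ : Xv p d w) := by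
    apply Subtype.ext
    push_cast
    rw [← hzb, hk]
  have hkval : (k : ZMod p) = 1 := by
    have h1 : fw (φ x) = 1 := by
      rw [hφ_comm]; exact hfv1 x rfl
    rw [hsplit, map_add, map_zsmul, hfw0 _ hz, hfw1 ⟨_, hgmem⟩ rfl, zero_add, zsmul_one] at h1
    exact h1
  have hdvd : (p : ℤ) ∣ (k - 1) := by
    have : ((k - 1 : ℤ) : ZMod p) = 0 := by push_cast [hkval]; ring
    exact (ZMod.intCast_zmod_eq_zero_iff_dvd _ p).mp this
  -- p • x ∈ Zpd
  have hpx : ((p • x : Xv p d v) : Fin d → ℚ_[p]) ∈ Zpd p d := by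
    intro i _
    have : ((p • x : Xv p d v) : Fin d → ℚ_[p]) i = (v i : ℚ_[p]) := by
      show ((p • x : Xv p d v) : Fin d → ℚ_[p]) i = _
      push_cast [hxdef]
      show (p : ℕ) • ((v i : ℚ_[p]) / p) = _
      rw [nsmul_eq_mul]
      field_simp
    rw [this]
    exact (v i).2
  -- p • (φ x) = v (coordinatewise)
  have hkey : ∀ i, (p : ℚ_[p]) * z i + k * (w i : ℚ_[p]) = (v i : ℚ_[p]) := by
    intro i
    have hφn : φ (p • x) = p • φ x := φ.toAddMonoidHom.map_nsmul p x
    have h1 : ((p • φ x : Xv p d w) : Fin d → ℚ_[p]) = ((p • x : Xv p d v) : Fin d → ℚ_[p]) := by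
      rw [← hφn]
      exact hφ_id _ hpx
    have h2 := congrFun h1 i
    rw [hsplit] at h2
    push_cast at h2
    have h3 : (p : ℚ_[p]) * (z i + k * ((w i : ℚ_[p]) / p)) = (p : ℚ_[p]) * ((v i : ℚ_[p]) / p) := by
      simpa [Pi.smul_apply, nsmul_eq_mul, zsmul_eq_mul, mul_add] using h2
    field_simp at h3
    linear_combination h3
  intro i
  obtain ⟨m, hm⟩ := hdvd
  have hzi : ‖z i‖ ≤ 1 := hz i (Set.mem_univ i)
  set zi : ℤ_[p] := ⟨z i, hzi⟩ with hzidef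
  refine ⟨zi + (m : ℤ_[p]) * w i, ?_⟩
  have hk' : (k : ℚ_[p]) = p * m + 1 := by
    have : k = p * m + 1 := by linarith
    rw [this]; push_cast; ring
  apply Subtype.ext
  push_cast
  linear_combination (-1 : ℚ_[p]) * hkey i + (w i : ℚ_[p]) * hk'
end
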